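/- For the GARK method with tableau A^{ff} = [1], A^{fs} = [0], A^{sf} = [1], A^{ss} = [1], b^f = b^s = [1], the 2×2 stability matrix evaluated at Z = [[−1, 1],[−10, −1]] has spectral radius (√5 + 3)/4 > 1. That is, R₂(Z) = I₂ + diag(1,1) · [[1 − (−1)·1, −1·0],[−(−10)·1, 1 − (−1)·1]]⁻¹ · [[−1, 1],[−10, −1]] has an eigenvalue of modulus (√5+3)/4. -/

import Mathlib

open Matrix

lemma inv_aux : (!![(2 : ℂ), 0; 10, 2])⁻¹ = !![(1/2 : ℂ), 0; -5/2, 1/2] := by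
  apply Matrix.inv_eq_right_inv
  norm_num [Matrix.mul_fin_two, Matrix.one_fin_two]
  rw [Matrix.one_fin_two]

lemma det_aux (μ : ℂ) :
    Matrix.det ((1 + 1 * (!![(2 : ℂ), 0; 10, 2])⁻¹ * !![(-1 : ℂ), 1; -10, -1])
        - μ • (1 : Matrix (Fin 2) (Fin 2) ℂ))
      = (μ - (-3 - Real.sqrt 5)/4) * (μ - (-3 + Real.sqrt 5)/4) := by
  have h5 : ((Real.sqrt 5 : ℂ))^2 = 5 := by
    rw [← Complex.ofReal_pow, Real.sq_sqrt (by norm_num : (0:ℝ) ≤ 5)]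
    norm_num
  rw [inv_aux, Matrix.det_fin_two]
  simp [Matrix.add_apply, Matrix.mul_apply, Fin.sum_univ_two, Matrix.one_apply,
    Matrix.smul_apply]
  ring_nf
  rw [show ((Real.sqrt 5 : ℂ))^2 = 5 from h5]
  ring

/-- The 2D stability matrix of the given GARK method at `Z = [[−1, 1],[−10, −1]]` has
spectral radius `(√5 + 3)/4 > 1`. -/
theorem stmt_13 :
    let R : Matrix (Fin 2) (Fin 2) ℂ :=
      1 + 1 * (!![(2 : ℂ), 0; 10, 2])⁻¹ * !![(-1 : ℂ), 1; -10, -1]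
    (∃ μ : ℂ, Matrix.det (R - μ • (1 : Matrix (Fin 2) (Fin 2) ℂ)) = 0 ∧
        ‖μ‖ = (Real.sqrt 5 + 3) / 4) ∧
    (∀ μ : ℂ, Matrix.det (R - μ • (1 : Matrix (Fin 2) (Fin 2) ℂ)) = 0 →
        ‖μ‖ ≤ (Real.sqrt 5 + 3) / 4) ∧
    1 < (Real.sqrt 5 + 3) / 4 := by
  intro R
  have hs0 : (0:ℝ) ≤ Real.sqrt 5 := Real.sqrt_nonneg 5
  have hs2 : (2:ℝ) ≤ Real.sqrt 5 := by
    nlinarith [Real.sq_sqrt (by norm_num : (0:ℝ) ≤ 5), Real.sqrt_nonneg 5]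
  have hs3 : Real.sqrt 5 ≤ 3 := by
    nlinarith [Real.sq_sqrt (by norm_num : (0:ℝ) ≤ 5), Real.sqrt_nonneg 5]
  refine ⟨⟨((-3 - Real.sqrt 5)/4 : ℝ), ?_, ?_⟩, ?_, by linarith⟩
  · rw [show ((((-3 - Real.sqrt 5)/4 : ℝ)) : ℂ) = ((-3 : ℂ) - Real.sqrt 5)/4 by
      push_cast; ring]
    rw [det_aux]; ring
  · rw [Complex.norm_real, Real.norm_eq_abs, abs_of_nonpos (by linarith)]; ring
  · intro μ hμ
    rw [det_aux] at hμ
    rcases mul_eq_zero.mp hμ with h | h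
    · have : μ = ((-3 : ℂ) - Real.sqrt 5)/4 := by linear_combination h
      rw [this, show ((-3 : ℂ) - Real.sqrt 5)/4 = (((-3 - Real.sqrt 5)/4 : ℝ) : ℂ) by
        push_cast; ring, Complex.norm_real, Real.norm_eq_abs, abs_of_nonpos (by linarith)]
      linarith
    · have : μ = ((-3 : ℂ) + Real.sqrt 5)/4 := by linear_combination h
      rw [this, show ((-3 : ℂ) + Real.sqrt 5)/4 = (((-3 + Real.sqrt 5)/4 : ℝ) : ℂ) by
        push_cast; ring, Complex.norm_real, Real.norm_eq_abs, abs_of_nonpos (by linarith)]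
      linarith
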